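/- Let k ≥ 2 and let G be an n-vertex bipartite graph with average degree d > 0 such that no proper subgraph of G has average degree larger than d. Then G contains a subgraph G' with bipartition (A, B) such that for some natural number i ≥ 1: (1) |A| ≥ (1/k)·2^{−ki/(k−1)}·n and |B| ≥ n/64; (2) the degree in G' of every vertex a ∈ A lies in the interval [2^{i−6}·d, 2^{i−5}·d]; and (3) the degree in G' of every vertex b ∈ B is at most 4d. -/

import Mathlib

open Finset

set_option maxHeartbeats 1000000 in
theorem lopsided_helper {V : Type*} [Fintype V] [DecidableEq V] (k : ℕ) (hk : 2 ≤ k)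
    (G : SimpleGraph V) (d : ℝ)
    (hd : d = 2 * (Nat.card G.edgeSet : ℝ) / (Fintype.card V : ℝ)) (hdpos : 0 < d)
    (hmax : ∀ H : G.Subgraph, H.verts.Nonempty →
      2 * (Nat.card H.edgeSet : ℝ) / (Nat.card H.verts : ℝ) ≤ d)
    (Y Z : Finset V) (hdisj : Disjoint Y Z) (hunion : Y ∪ Z = Finset.univ)
    (hcross : ∀ ⦃u v : V⦄, G.Adj u v → (u ∈ Y ∧ v ∈ Z) ∨ (u ∈ Z ∧ v ∈ Y))
    (hsize : Y.card ≤ Z.card) :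
    ∃ (G' : G.Subgraph) (A B : Set V) (i : ℕ), 1 ≤ i ∧
      G'.verts = A ∪ B ∧ Disjoint A B ∧
      (∀ ⦃u v : V⦄, G'.Adj u v → (u ∈ A ∧ v ∈ B) ∨ (u ∈ B ∧ v ∈ A)) ∧
      (1 / (k : ℝ)) * 2 ^ (-((k : ℝ) * i) / ((k : ℝ) - 1)) * (Fintype.card V : ℝ) ≤
        (Nat.card A : ℝ) ∧
      (Fintype.card V : ℝ) / 64 ≤ (Nat.card B : ℝ) ∧
      (∀ a ∈ A, (2 : ℝ) ^ ((i : ℤ) - 6) * d ≤ (Nat.card (G'.neighborSet a) : ℝ) ∧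
        (Nat.card (G'.neighborSet a) : ℝ) ≤ (2 : ℝ) ^ ((i : ℤ) - 5) * d) ∧
      (∀ b ∈ B, (Nat.card (G'.neighborSet b) : ℝ) ≤ 4 * d) := by
  classical
  set n := Fintype.card V with hn
  have hn0 : 0 < n := by
    rcases Nat.eq_zero_or_pos n with h | h
    · rw [h] at hd; simp at hd; rw [hd] at hdpos; norm_num at hdpos
    · exact h
  -- neighbors of Y are in Z and vice versa
  have hnbrY : ∀ y ∈ Y, G.neighborFinset y ⊆ Z := by
    intro y hy v hv
    rw [SimpleGraph.mem_neighborFinset] at hv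
    rcases hcross hv with ⟨_, h2⟩ | ⟨h1, _⟩
    · exact h2
    · exact absurd hy (Finset.disjoint_right.1 hdisj h1)
  have hnbrZ : ∀ b ∈ Z, G.neighborFinset b ⊆ Y := by
    intro b hb v hv
    rw [SimpleGraph.mem_neighborFinset] at hv
    rcases hcross hv with ⟨h1, _⟩ | ⟨_, h2⟩
    · exact absurd hb (Finset.disjoint_left.1 hdisj h1)
    · exact h2
  -- double counting
  have hdc : ∀ (S T : Finset V), ∑ y ∈ S, (G.neighborFinset y ∩ T).card
      = ∑ t ∈ T, (G.neighborFinset t ∩ S).card := by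
    have h1 : ∀ (S T : Finset V), ∑ y ∈ S, (G.neighborFinset y ∩ T).card
        = ∑ y ∈ S, ∑ t ∈ T, if G.Adj y t then 1 else 0 := by
      intro S T
      refine Finset.sum_congr rfl fun y _ => ?_
      have : G.neighborFinset y ∩ T = T.filter (fun t => G.Adj y t) := by
        ext t; simp [SimpleGraph.mem_neighborFinset, and_comm]
      rw [this, Finset.card_filter]
    intro S T
    rw [h1, h1, Finset.sum_comm]
    refine Finset.sum_congr rfl fun t _ => Finset.sum_congr rfl fun y _ => ?_
    simp only [SimpleGraph.adj_comm]
  -- edge count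
  set eN := G.edgeFinset.card with heNdef
  have heN : Nat.card G.edgeSet = eN := by
    rw [Nat.card_coe_set_eq, Set.ncard_eq_toFinset_card']
    rw [heNdef]; congr 1
  have hsumY : ∑ y ∈ Y, G.degree y = eN := by
    have hYZ : ∑ y ∈ Y, G.degree y = ∑ b ∈ Z, G.degree b := by
      have h1 : ∑ y ∈ Y, G.degree y = ∑ y ∈ Y, (G.neighborFinset y ∩ Z).card :=
        Finset.sum_congr rfl fun y hy => by
          rw [Finset.inter_eq_left.2 (hnbrY y hy)]; rfl
      have h2 : ∑ b ∈ Z, G.degree b = ∑ b ∈ Z, (G.neighborFinset b ∩ Y).card :=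
        Finset.sum_congr rfl fun b hb => by
          rw [Finset.inter_eq_left.2 (hnbrZ b hb)]; rfl
      rw [h1, h2, hdc]
    have h2e : ∑ y ∈ Y, G.degree y + ∑ b ∈ Z, G.degree b = 2 * eN := by
      rw [← Finset.sum_union hdisj, hunion]
      exact G.sum_degrees_eq_twice_card_edges
    omega
  have hedn : (eN : ℝ) * 2 = d * n := by
    rw [hd, heN]
    field_simp
  -- high degree vertices
  set Hs := Z.filter (fun b => 4 * d < (G.degree b : ℝ)) with hHsdef
  set Bf := Z \ Hs with hBfdef
  set L := ∑ b ∈ Hs, G.degree b with hLdef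
  have hHsZ : Hs ⊆ Z := Finset.filter_subset _ _
  -- bound on L via hmax
  have hL1 : (L : ℝ) * 2 ≤ d * ((Y.card : ℝ) + (Hs.card : ℝ)) := by
    by_cases hne : (Y ∪ Hs).Nonempty
    · set H : G.Subgraph := (⊤ : G.Subgraph).induce ↑(Y ∪ Hs) with hHdef
      have hvcard : (Nat.card H.verts : ℝ) = ((Y ∪ Hs).card : ℝ) := by
        have : Nat.card H.verts = (Y ∪ Hs).card := by
          rw [hHdef, SimpleGraph.Subgraph.induce_verts, Nat.card_coe_set_eq,
            Set.ncard_coe_finset]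
        exact_mod_cast this
      have hEC : L ≤ Nat.card H.edgeSet := by
        have hfin : H.edgeSet.Finite := Set.toFinite _
        rw [Nat.card_coe_set_eq, Set.ncard_eq_toFinset_card _ hfin]
        have hmap : ∀ p ∈ Hs.sigma (fun b => G.neighborFinset b),
            (fun p : (_ : V) × V => s(p.1, p.2)) p ∈ hfin.toFinset := by
          intro p hp
          rw [Finset.mem_sigma] at hp
          obtain ⟨hb, hy⟩ := hp
          have hadj : G.Adj p.1 p.2 := (SimpleGraph.mem_neighborFinset _ _ _).1 hy
          have hyY : p.2 ∈ Y := hnbrZ p.1 (hHsZ hb) hy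
          rw [Set.Finite.mem_toFinset, SimpleGraph.Subgraph.mem_edgeSet, hHdef,
            SimpleGraph.Subgraph.induce_adj]
          exact ⟨by simp [Finset.mem_union, hb], by simp [Finset.mem_union, hyY], hadj⟩
        have hinj : Set.InjOn (fun p : (_ : V) × V => s(p.1, p.2))
            ↑(Hs.sigma (fun b => G.neighborFinset b)) := by
          intro p hp q hq hpq
          simp only [Finset.coe_sigma, Set.mem_sigma_iff, Finset.mem_coe] at hp hq
          simp only [Sym2.eq_iff] at hpq
          rcases hpq with ⟨h1, h2⟩ | ⟨h1, h2⟩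
          · obtain ⟨pa, pb⟩ := p
            obtain ⟨qa, qb⟩ := q
            simp only at h1 h2
            subst h1; subst h2; rfl
          · exfalso
            have hbZ : p.1 ∈ Z := hHsZ hp.1
            have hyY : p.1 ∈ Y := by
              rw [h1]; exact hnbrZ q.1 (hHsZ hq.1) hq.2
            exact Finset.disjoint_left.1 hdisj hyY hbZ
        calc L = (Hs.sigma (fun b => G.neighborFinset b)).card := by
              rw [Finset.card_sigma]; rfl
          _ ≤ hfin.toFinset.card := Finset.card_le_card_of_injOn _ hmap hinj
      have hvne : H.verts.Nonempty := by
        rw [hHdef, SimpleGraph.Subgraph.induce_verts]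
        exact_mod_cast Finset.coe_nonempty.2 hne
      have hm := hmax H hvne
      have hS0 : (0 : ℝ) < ((Y ∪ Hs).card : ℝ) := by
        exact_mod_cast Finset.card_pos.2 hne
      rw [div_le_iff₀ (by rw [hvcard]; exact hS0)] at hm
      have hcu : ((Y ∪ Hs).card : ℝ) = (Y.card : ℝ) + (Hs.card : ℝ) := by
        have : (Y ∪ Hs).card = Y.card + Hs.card :=
          Finset.card_union_of_disjoint (hdisj.mono_right hHsZ)
        exact_mod_cast this
      have hLE : (L : ℝ) ≤ (Nat.card H.edgeSet : ℝ) := by exact_mod_cast hEC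
      rw [hvcard, hcu] at hm
      nlinarith
    · rw [Finset.not_nonempty_iff_eq_empty, Finset.union_eq_empty] at hne
      have h1 : L = 0 := by rw [hLdef, hne.2, Finset.sum_empty]
      rw [h1, hne.1, hne.2]
      simp
  have hL2 : d * 4 * (Hs.card : ℝ) ≤ (L : ℝ) := by
    have h1 : ∀ b ∈ Hs, 4 * d ≤ (G.degree b : ℝ) :=
      fun b hb => le_of_lt (Finset.mem_filter.1 hb).2
    calc d * 4 * (Hs.card : ℝ) = ∑ _b ∈ Hs, 4 * d := by
          rw [Finset.sum_const, nsmul_eq_mul]; ring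
      _ ≤ ∑ b ∈ Hs, (G.degree b : ℝ) := Finset.sum_le_sum h1
      _ = (L : ℝ) := by rw [hLdef]; push_cast; ring
  have hYcZc : Y.card + Z.card = n := by
    rw [← Finset.card_union_of_disjoint hdisj, hunion, hn]
    exact Finset.card_univ
  have hYn : (Y.card : ℝ) * 2 ≤ (n : ℝ) := by
    have : Y.card * 2 ≤ n := by omega
    exact_mod_cast this
  have hZn : (n : ℝ) ≤ (Z.card : ℝ) * 2 := by
    have : n ≤ Z.card * 2 := by omega
    exact_mod_cast this
  have hHsY : (Hs.card : ℝ) * 7 ≤ (Y.card : ℝ) := by nlinarith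
  have hLY : (L : ℝ) * 7 ≤ d * (Y.card : ℝ) * 4 := by nlinarith
  -- degrees into Bf
  set degB := fun y => (G.neighborFinset y ∩ Bf).card with hdegBdef
  have hBfsum : ∑ y ∈ Y, degB y + L = eN := by
    have hsplit : ∀ y ∈ Y, (G.neighborFinset y ∩ Z).card
        = degB y + (G.neighborFinset y ∩ Hs).card := by
      intro y _
      have hZs : G.neighborFinset y ∩ Z = (G.neighborFinset y ∩ Bf) ∪ (G.neighborFinset y ∩ Hs) := by
        rw [← Finset.inter_union_distrib_left, hBfdef, Finset.sdiff_union_of_subset hHsZ]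
      rw [hZs, Finset.card_union_of_disjoint]
      exact (Finset.sdiff_disjoint).mono Finset.inter_subset_right Finset.inter_subset_right
    have h1 : ∑ y ∈ Y, (G.neighborFinset y ∩ Z).card
        = ∑ y ∈ Y, degB y + ∑ y ∈ Y, (G.neighborFinset y ∩ Hs).card := by
      rw [← Finset.sum_add_distrib]
      exact Finset.sum_congr rfl hsplit
    have h2 : ∑ y ∈ Y, (G.neighborFinset y ∩ Hs).card = L := by
      rw [hdc Y Hs, hLdef]
      exact Finset.sum_congr rfl fun b hb => by
        rw [Finset.inter_eq_left.2 (hnbrZ b (hHsZ hb))]; rfl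
    have h3 : ∑ y ∈ Y, (G.neighborFinset y ∩ Z).card = eN := by
      rw [← hsumY]
      exact Finset.sum_congr rfl fun y hy => by
        rw [Finset.inter_eq_left.2 (hnbrY y hy)]; rfl
    omega
  have hYdegB : 3 / 14 * (d * n) ≤ ∑ y ∈ Y, (degB y : ℝ) := by
    have h1 : (∑ y ∈ Y, (degB y : ℝ)) = (eN : ℝ) - L := by
      have := hBfsum
      push_cast [← this]
      ring
    rw [h1]
    nlinarith
  -- Y'
  set Y' := Y.filter (fun y => d ≤ (degB y : ℝ) * 32) with hY'def
  have hY'sum : d * n / 8 ≤ ∑ y ∈ Y', (degB y : ℝ) := by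
    have hsp : ∑ y ∈ Y', (degB y : ℝ)
        + ∑ y ∈ Y.filter (fun y => ¬ d ≤ (degB y : ℝ) * 32), (degB y : ℝ)
        = ∑ y ∈ Y, (degB y : ℝ) := Finset.sum_filter_add_sum_filter_not Y _ _
    have hsmall : ∑ y ∈ Y.filter (fun y => ¬ d ≤ (degB y : ℝ) * 32), (degB y : ℝ)
        ≤ (Y.card : ℝ) * (d / 32) := by
      calc ∑ y ∈ Y.filter (fun y => ¬ d ≤ (degB y : ℝ) * 32), (degB y : ℝ)
          ≤ ∑ _y ∈ Y.filter (fun y => ¬ d ≤ (degB y : ℝ) * 32), d / 32 := by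
            refine Finset.sum_le_sum fun y hy => ?_
            have := (Finset.mem_filter.1 hy).2
            push_neg at this
            linarith
        _ ≤ (Y.card : ℝ) * (d / 32) := by
            rw [Finset.sum_const, nsmul_eq_mul]
            have hc : ((Y.filter (fun y => ¬ d ≤ (degB y : ℝ) * 32)).card : ℝ) ≤ (Y.card : ℝ) := by
              exact_mod_cast Finset.card_le_card (Finset.filter_subset _ _)
            have : 0 ≤ d / 32 := by linarith
            nlinarith
    nlinarith [hYdegB]
  -- the dyadic index function
  have hdegBn : ∀ y, (degB y : ℝ) ≤ n := by
    intro y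
    have : degB y ≤ n := le_trans (Finset.card_le_card (Finset.inter_subset_right)) (by
      rw [hn]; exact Finset.card_le_univ _)
    exact_mod_cast this
  obtain ⟨I, hI⟩ : ∃ I : ℕ, (n : ℝ) < 2 ^ ((I : ℤ) - 5) * d := by
    obtain ⟨I, hI⟩ := pow_unbounded_of_one_lt ((n : ℝ) * 32 / d) (one_lt_two (α := ℝ))
    refine ⟨I, ?_⟩
    have h32 : (2 : ℝ) ^ ((I : ℤ) - 5) = 2 ^ I / 32 := by
      rw [zpow_sub₀ (by norm_num : (2:ℝ) ≠ 0)]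
      norm_num
    rw [h32]
    rw [div_lt_iff₀ hdpos] at hI
    linarith
  have hexI : ∀ y : V, (degB y : ℝ) < 2 ^ ((I : ℤ) - 5) * d :=
    fun y => lt_of_le_of_lt (hdegBn y) hI
  have hfind : ∀ y : V, ∃ i : ℕ, (degB y : ℝ) < 2 ^ ((i : ℤ) - 5) * d := fun y => ⟨I, hexI y⟩
  set f := fun y => Nat.find (hfind y) with hfdef
  have hfu : ∀ y : V, (degB y : ℝ) < 2 ^ ((f y : ℤ) - 5) * d := fun y => Nat.find_spec (hfind y)
  have hfI : ∀ y : V, f y ≤ I := fun y => Nat.find_min' (hfind y) (hexI y)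
  have hf1 : ∀ y ∈ Y', 1 ≤ f y := by
    intro y hy
    by_contra h
    have h0 : f y = 0 := by omega
    have h2 := hfu y
    rw [h0] at h2
    have h3 : (2:ℝ) ^ (((0:ℕ) : ℤ) - 5) = 1 / 32 := by norm_num
    rw [h3] at h2
    have hy' := (Finset.mem_filter.1 hy).2
    linarith
  have hfl : ∀ y ∈ Y', 2 ^ ((f y : ℤ) - 6) * d ≤ (degB y : ℝ) := by
    intro y hy
    have h1 := hf1 y hy
    have hlt : f y - 1 < f y := by omega
    have hmin : ¬ ((degB y : ℝ) < 2 ^ (((f y - 1 : ℕ) : ℤ) - 5) * d) :=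
      Nat.find_min (hfind y) hlt
    push_neg at hmin
    have hcast : ((f y - 1 : ℕ) : ℤ) - 5 = (f y : ℤ) - 6 := by omega
    rwa [hcast] at hmin
  set C := fun i : ℕ => Y'.filter (fun y => f y = i) with hCdef
  have hk2 : (2 : ℝ) ≤ (k : ℝ) := by exact_mod_cast hk
  have hk0 : (0 : ℝ) < (k : ℝ) := by linarith
  have hnR : (0 : ℝ) < (n : ℝ) := by exact_mod_cast hn0
  have key : ∃ i : ℕ, 1 ≤ i ∧
      (1 / (k : ℝ)) * 2 ^ (-((k : ℝ) * i) / ((k : ℝ) - 1)) * (n : ℝ) ≤ ((C i).card : ℝ) := by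
    by_contra hcon
    push_neg at hcon
    set x : ℝ := (2 : ℝ) ^ (-(1 : ℝ) / ((k : ℝ) - 1)) with hxdef
    have hx0 : 0 < x := Real.rpow_pos_of_pos two_pos _
    have hkm1 : (0:ℝ) < (k:ℝ) - 1 := by linarith
    have hxk : x * (k : ℝ) ≤ (k : ℝ) - ((3:ℝ)/5) := by
      have hc9 : 0.6931471803 < Real.log 2 := Real.log_two_gt_d9
      set t : ℝ := Real.log 2 / ((k:ℝ) - 1) with htdef
      have ht0 : 0 < t := div_pos (by linarith) hkm1
      have htk : t * ((k:ℝ) - 1) = Real.log 2 := div_mul_cancel₀ _ (ne_of_gt hkm1)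
      have htk' : t * (k:ℝ) = Real.log 2 + t := by linear_combination htk
      have hxe : x = Real.exp (-t) := by
        rw [hxdef, Real.rpow_def_of_pos two_pos]
        congr 1
        rw [htdef]; ring
      have he : Real.exp (-t) ≤ 1 / (1 + t) := by
        rw [Real.exp_neg, one_div]
        exact inv_anti₀ (by linarith) (by linarith [Real.add_one_le_exp t])
      have hA : x * (1 + t) ≤ 1 := by
        rw [hxe]
        rw [← le_div_iff₀ (by linarith : (0:ℝ) < 1 + t)]
        exact he
      have hB : (k : ℝ) ≤ ((k:ℝ) - ((3:ℝ)/5)) * (1 + t) := by nlinarith [htk', hc9, ht0]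
      have hA' : x * (1 + t) * ((k:ℝ) - ((3:ℝ)/5)) ≤ 1 * ((k:ℝ) - ((3:ℝ)/5)) :=
        mul_le_mul_of_nonneg_right hA (by linarith)
      have hB' : x * (k : ℝ) ≤ x * (((k:ℝ) - ((3:ℝ)/5)) * (1 + t)) :=
        mul_le_mul_of_nonneg_left hB hx0.le
      nlinarith [hA', hB']
    have hx1 : x < 1 := by nlinarith [hxk, hk0, hx0]
    have hk1mx : ((3:ℝ)/5) ≤ (1 - x) * (k:ℝ) := by nlinarith [hxk]
    have hS0 : (0:ℝ) ≤ ∑ j ∈ Finset.range (I+1), x ^ j :=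
      Finset.sum_nonneg fun j _ => pow_nonneg hx0.le j
    have hSm : (∑ j ∈ Finset.range (I+1), x ^ j) * (1 - x) ≤ 1 := by
      have hgs := geom_sum_mul x (I+1)
      nlinarith [pow_nonneg hx0.le (I+1)]
    have hgeom : ∑ j ∈ Finset.range (I+1), x ^ j ≤ (k:ℝ) / ((3:ℝ)/5) := by
      rw [le_div_iff₀ (by norm_num : (0:ℝ) < ((3:ℝ)/5))]
      nlinarith [mul_le_mul_of_nonneg_left hk1mx hS0,
        mul_le_mul_of_nonneg_right hSm hk0.le]
    have hid : ∀ j : ℕ, (2:ℝ) ^ (-((k:ℝ)*j)/((k:ℝ)-1)) * 2 ^ j = x ^ j := by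
      intro j
      have h2 : ((2:ℝ) ^ j : ℝ) = (2:ℝ) ^ (j:ℝ) := (Real.rpow_natCast 2 j).symm
      have hx : x ^ j = (2:ℝ) ^ ((-(1:ℝ)/((k:ℝ)-1)) * j) := by
        rw [hxdef, ← Real.rpow_natCast ((2:ℝ) ^ (-(1:ℝ)/((k:ℝ)-1))) j,
          ← Real.rpow_mul (by norm_num : (0:ℝ) ≤ 2)]
      rw [h2, hx, ← Real.rpow_add two_pos]
      congr 1
      field_simp
      ring
    have hstep1 : ∑ y ∈ Y', (degB y : ℝ) ≤ d / 32 * ∑ y ∈ Y', (2:ℝ) ^ (f y) := by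
      rw [Finset.mul_sum]
      refine Finset.sum_le_sum fun y _ => ?_
      have h2 : (2:ℝ) ^ ((f y : ℤ) - 5) * d = d / 32 * 2 ^ (f y) := by
        rw [zpow_sub₀ (by norm_num : (2:ℝ) ≠ 0), zpow_natCast]
        norm_num
        ring
      calc (degB y : ℝ) ≤ 2 ^ ((f y : ℤ) - 5) * d := (hfu y).le
        _ = d / 32 * 2 ^ (f y) := h2
    have hstep2 : ∑ y ∈ Y', (2:ℝ) ^ (f y)
        = ∑ j ∈ Finset.range (I+1), ((C j).card : ℝ) * 2 ^ j := by
      rw [← Finset.sum_fiberwise_of_maps_to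
        (fun y (_ : y ∈ Y') => Finset.mem_range.2 (Nat.lt_succ_of_le (hfI y)))
        (fun y => (2:ℝ) ^ (f y))]
      refine Finset.sum_congr rfl fun j _ => ?_
      rw [Finset.sum_congr rfl (fun y hy => by rw [(Finset.mem_filter.1 hy).2]),
        Finset.sum_const, nsmul_eq_mul]
    have hstep3 : ∀ j ∈ Finset.range (I+1), ((C j).card : ℝ) * 2 ^ j ≤ (n:ℝ) / k * x ^ j := by
      intro j _
      rcases Nat.eq_zero_or_pos j with h0 | h1
      · subst h0
        have hC0 : C 0 = ∅ := by
          rw [hCdef]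
          refine Finset.filter_eq_empty_iff.2 fun {y} hy => ?_
          have := hf1 y hy; omega
        rw [hC0]
        simp only [Finset.card_empty, Nat.cast_zero, zero_mul, pow_zero, mul_one]
        positivity
      · have hcon' := le_of_lt (hcon j h1)
        have h2 : (0:ℝ) ≤ 2 ^ j := by positivity
        calc ((C j).card:ℝ) * 2^j
            ≤ ((1/(k:ℝ)) * 2 ^ (-((k:ℝ)*j)/((k:ℝ)-1)) * n) * 2^j :=
              mul_le_mul_of_nonneg_right hcon' h2
          _ = (n:ℝ)/k * ((2:ℝ) ^ (-((k:ℝ)*j)/((k:ℝ)-1)) * 2^j) := by ring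
          _ = (n:ℝ)/k * x^j := by rw [hid j]
    have hup : ∑ y ∈ Y', (degB y:ℝ) ≤ d/32 * ((n:ℝ)/k * ((k:ℝ)/((3:ℝ)/5))) := by
      have h1 : ∑ j ∈ Finset.range (I+1), ((C j).card : ℝ) * 2 ^ j
          ≤ (n:ℝ)/k * ∑ j ∈ Finset.range (I+1), x ^ j := by
        rw [Finset.mul_sum]
        exact Finset.sum_le_sum hstep3
      have h2 : (n:ℝ)/k * ∑ j ∈ Finset.range (I+1), x ^ j ≤ (n:ℝ)/k * ((k:ℝ)/((3:ℝ)/5)) :=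
        mul_le_mul_of_nonneg_left hgeom (by positivity)
      calc ∑ y ∈ Y', (degB y:ℝ) ≤ d / 32 * ∑ y ∈ Y', (2:ℝ) ^ (f y) := hstep1
        _ = d / 32 * ∑ j ∈ Finset.range (I+1), ((C j).card : ℝ) * 2 ^ j := by rw [hstep2]
        _ ≤ d/32 * ((n:ℝ)/k * ((k:ℝ)/((3:ℝ)/5))) := by
            have hd32 : (0:ℝ) ≤ d/32 := by linarith
            exact mul_le_mul_of_nonneg_left (le_trans h1 h2) hd32
    have hcancel : (n:ℝ)/k * ((k:ℝ)/((3:ℝ)/5)) = (n:ℝ)/((3:ℝ)/5) := by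
      field_simp
    rw [hcancel] at hup
    nlinarith [hY'sum, mul_pos hdpos hnR]
  -- construct the subgraph
  obtain ⟨i, hi1, hikey⟩ := key
  have hCY' : C i ⊆ Y' := Finset.filter_subset _ _
  have hCY : C i ⊆ Y := fun a ha => Finset.filter_subset _ _ (hCY' ha)
  have hBfZ : Bf ⊆ Z := Finset.sdiff_subset
  have hdisjCB : Disjoint (C i) Bf := (hdisj.mono hCY hBfZ)
  refine ⟨{ verts := ↑(C i) ∪ ↑Bf,
            Adj := fun u v => G.Adj u v ∧ ((u ∈ C i ∧ v ∈ Bf) ∨ (u ∈ Bf ∧ v ∈ C i)),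
            adj_sub := fun h => h.1,
            edge_vert := fun {u v} h => by
              rcases h.2 with ⟨h1, _⟩ | ⟨h1, _⟩
              · exact Or.inl (Finset.mem_coe.2 h1)
              · exact Or.inr (Finset.mem_coe.2 h1),
            symm := ⟨fun u v h => ⟨h.1.symm, by tauto⟩⟩ },
    ↑(C i), ↑Bf, i, hi1, rfl, ?_, ?_, ?_, ?_, ?_, ?_⟩
  · exact Finset.disjoint_coe.2 hdisjCB
  · intro u v h
    rcases h.2 with ⟨h1, h2⟩ | ⟨h1, h2⟩
    · exact Or.inl ⟨Finset.mem_coe.2 h1, Finset.mem_coe.2 h2⟩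
    · exact Or.inr ⟨Finset.mem_coe.2 h1, Finset.mem_coe.2 h2⟩
  · rw [Nat.card_coe_set_eq, Set.ncard_coe_finset]
    exact hikey
  · rw [Nat.card_coe_set_eq, Set.ncard_coe_finset]
    have hBfc : Bf.card = Z.card - Hs.card := Finset.card_sdiff_of_subset hHsZ
    have hHsZc : Hs.card ≤ Z.card := Finset.card_le_card hHsZ
    have hBfR : (Bf.card : ℝ) = (Z.card : ℝ) - (Hs.card : ℝ) := by
      rw [hBfc]
      push_cast [hHsZc]
      ring
    rw [hBfR]
    nlinarith
  · intro a ha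
    have haC : a ∈ C i := Finset.mem_coe.1 ha
    have haY' : a ∈ Y' := hCY' haC
    have hfa : f a = i := (Finset.mem_filter.1 haC).2
    have hans : {v | G.Adj a v ∧ ((a ∈ C i ∧ v ∈ Bf) ∨ (a ∈ Bf ∧ v ∈ C i))}
        = ↑(G.neighborFinset a ∩ Bf) := by
      ext v
      simp only [Set.mem_setOf_eq, Finset.coe_inter, Set.mem_inter_iff, Finset.mem_coe,
        SimpleGraph.mem_neighborFinset]
      constructor
      · rintro ⟨hadj, ⟨_, h2⟩ | ⟨h1, _⟩⟩
        · exact ⟨hadj, h2⟩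
        · exact absurd h1 (Finset.disjoint_left.1 hdisjCB haC)
      · rintro ⟨hadj, hv⟩
        exact ⟨hadj, Or.inl ⟨haC, hv⟩⟩
    have hcard : (Nat.card {v | G.Adj a v ∧ ((a ∈ C i ∧ v ∈ Bf) ∨ (a ∈ Bf ∧ v ∈ C i))} : ℝ)
        = (degB a : ℝ) := by
      rw [hans, Nat.card_coe_set_eq, Set.ncard_coe_finset]
    constructor
    · show (2:ℝ) ^ ((i:ℤ) - 6) * d ≤ _
      rw [SimpleGraph.Subgraph.neighborSet, hcard]
      have := hfl a haY'
      rwa [hfa] at this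
    · show _ ≤ (2:ℝ) ^ ((i:ℤ) - 5) * d
      rw [SimpleGraph.Subgraph.neighborSet, hcard]
      have := (hfu a).le
      rwa [hfa] at this
  · intro b hb
    have hbBf : b ∈ Bf := Finset.mem_coe.1 hb
    have hbZ : b ∈ Z := hBfZ hbBf
    have hbd : (G.degree b : ℝ) ≤ 4 * d := by
      have := (Finset.mem_sdiff.1 hbBf).2
      rw [hHsdef, Finset.mem_filter] at this
      push_neg at this
      exact this hbZ
    have hsub : {v | G.Adj b v ∧ ((b ∈ C i ∧ v ∈ Bf) ∨ (b ∈ Bf ∧ v ∈ C i))}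
        ⊆ G.neighborSet b := fun v hv => hv.1
    have h1 : Nat.card {v | G.Adj b v ∧ ((b ∈ C i ∧ v ∈ Bf) ∨ (b ∈ Bf ∧ v ∈ C i))}
        ≤ Nat.card (G.neighborSet b) := by
      rw [Nat.card_coe_set_eq, Nat.card_coe_set_eq]
      exact Set.ncard_le_ncard hsub (Set.toFinite _)
    have h2 : Nat.card (G.neighborSet b) = G.degree b := by
      rw [Nat.card_eq_fintype_card]
      exact SimpleGraph.card_neighborSet_eq_degree G b
    rw [SimpleGraph.Subgraph.neighborSet]
    calc (Nat.card {v | G.Adj b v ∧ ((b ∈ C i ∧ v ∈ Bf) ∨ (b ∈ Bf ∧ v ∈ C i))} : ℝ)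
        ≤ (G.degree b : ℝ) := by exact_mod_cast h1.trans_eq h2
      _ ≤ 4 * d := hbd

/-- Let `k ≥ 2` and let `G` be an `n`-vertex bipartite graph with average
degree `d > 0` such that no (proper) subgraph of `G` has average degree larger than `d`.
Then `G` contains a subgraph `G'` with bipartition `(A, B)` such that for some natural number
`i ≥ 1`: (1) `|A| ≥ (1/k)·2^{−ki/(k−1)}·n` and `|B| ≥ n/64`; (2) every `a ∈ A` has degree
in `G'` in the interval `[2^{i−6}·d, 2^{i−5}·d]`; and (3) every `b ∈ B` has degree in `G'`
at most `4d`. -/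
theorem lopsided_regularization {V : Type*} [Fintype V] (k : ℕ) (hk : 2 ≤ k)
    (G : SimpleGraph V) (X : Set V)
    (hbip : ∀ ⦃u v : V⦄, G.Adj u v → (u ∈ X ↔ v ∉ X))
    (d : ℝ) (hd : d = 2 * (Nat.card G.edgeSet : ℝ) / (Fintype.card V : ℝ)) (hdpos : 0 < d)
    (hmax : ∀ H : G.Subgraph, H.verts.Nonempty →
      2 * (Nat.card H.edgeSet : ℝ) / (Nat.card H.verts : ℝ) ≤ d) :
    ∃ (G' : G.Subgraph) (A B : Set V) (i : ℕ), 1 ≤ i ∧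
      G'.verts = A ∪ B ∧ Disjoint A B ∧
      (∀ ⦃u v : V⦄, G'.Adj u v → (u ∈ A ∧ v ∈ B) ∨ (u ∈ B ∧ v ∈ A)) ∧
      (1 / (k : ℝ)) * 2 ^ (-((k : ℝ) * i) / ((k : ℝ) - 1)) * (Fintype.card V : ℝ) ≤
        (Nat.card A : ℝ) ∧
      (Fintype.card V : ℝ) / 64 ≤ (Nat.card B : ℝ) ∧
      (∀ a ∈ A, (2 : ℝ) ^ ((i : ℤ) - 6) * d ≤ (Nat.card (G'.neighborSet a) : ℝ) ∧
        (Nat.card (G'.neighborSet a) : ℝ) ≤ (2 : ℝ) ^ ((i : ℤ) - 5) * d) ∧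
      (∀ b ∈ B, (Nat.card (G'.neighborSet b) : ℝ) ≤ 4 * d) := by
  haveI : DecidableEq V := Classical.decEq V
  classical
  set P := Finset.univ.filter (fun v => v ∈ X) with hP
  set Q := Finset.univ.filter (fun v => v ∉ X) with hQ
  have hdisj : Disjoint P Q := by
    rw [Finset.disjoint_left]
    intro a ha hb
    simp [hP, hQ] at ha hb
    exact hb ha
  have hunion : P ∪ Q = Finset.univ := by
    ext v
    by_cases h : v ∈ X <;> simp [hP, hQ, h]
  have hcross : ∀ ⦃u v : V⦄, G.Adj u v → (u ∈ P ∧ v ∈ Q) ∨ (u ∈ Q ∧ v ∈ P) := by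
    intro u v h
    have := hbip h
    by_cases hu : u ∈ X
    · left; simp [hP, hQ, hu, this.1 hu]
    · right
      have hv : v ∈ X := by
        by_contra hv
        exact hu (this.2 hv)
      simp [hP, hQ, hu, hv]
  rcases le_total P.card Q.card with h | h
  · exact lopsided_helper k hk G d hd hdpos hmax P Q hdisj hunion hcross h
  · refine lopsided_helper k hk G d hd hdpos hmax Q P hdisj.symm (by rw [Finset.union_comm]; exact hunion) ?_ h
    intro u v hadj
    rcases hcross hadj with h1 | h1
    · exact Or.inr ⟨h1.1, h1.2⟩
    · exact Or.inl ⟨h1.1, h1.2⟩
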